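/- In the setting where the first factor is the quantum principal homogeneous space X̃ and the second factor is the quantum cone Ξ̃: assume additionally t₂₂t₁₁ − q·t₂₁t₁₂ = 1 and τ₁₁τ₂₂ − q·τ₁₂τ₂₁ = 0. Then the elements k₁₁, k₁₂, k₂₁, k₂₂ satisfy: k₁₁k₁₂ = q⁻¹k₁₂k₁₁, k₂₁k₂₂ = q⁻¹k₂₂k₂₁, k₁₁k₂₁ = q⁻¹k₂₁k₁₁, k₁₂k₂₂ = q⁻¹k₂₂k₁₂, k₁₂k₂₁ = k₂₁k₁₂, k₁₁k₂₂ − k₂₂k₁₁ = (q⁻¹ − q)k₁₂k₂₁, and k₂₂k₁₁ − q·k₁₂k₂₁ = 0. -/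
import Mathlib

private lemma mra {A : Type*} [Ring A] {a b d e : A} (h : a * b = d * e) (x : A) :
    a * (b * x) = d * (e * x) := by rw [← mul_assoc, h, mul_assoc]

private lemma mrs {A : Type*} [Ring A] [Algebra ℂ A] {a b d e : A} {c : ℂ}
    (h : a * b = c • (d * e)) (x : A) : a * (b * x) = c • (d * (e * x)) := by
  rw [← mul_assoc, h, smul_mul_assoc, mul_assoc]

private lemma mrp {A : Type*} [Ring A] [Algebra ℂ A] {a b d e f g : A} {c : ℂ}
    (h : a * b = d * e + c • (f * g)) (x : A) :
    a * (b * x) = d * (e * x) + c • (f * (g * x)) := by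
  rw [← mul_assoc, h, add_mul, smul_mul_assoc, mul_assoc, mul_assoc]

/-- **Commutation relations for the invariant kernels, case `Y₁ = X̃`, `Y₂ = Ξ̃`.**
In a unital ℂ-algebra containing a copy of the opposite quantum `SL₂` (the
`t`'s) and of quantum `SL₂` (the `τ`'s), mutually commuting, and satisfying
the determinant relations `t₂₂t₁₁ - q t₂₁t₁₂ = 1`, `τ₁₁τ₂₂ - q τ₁₂τ₂₁ = 0`,
the kernels `k₁₁ = t₁₁τ₂₂ - q t₁₂τ₂₁`, `k₁₂ = -q⁻¹t₁₁τ₁₂ + t₁₂τ₁₁`,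
`k₂₁ = t₂₁τ₂₂ - q t₂₂τ₂₁`, `k₂₂ = -q⁻¹t₂₁τ₁₂ + t₂₂τ₁₁` satisfy the quantum
`SL₂` relations with `q` replaced by `q⁻¹`, with quantum determinant
`k₂₂k₁₁ - q k₁₂k₂₁ = 0`. -/
theorem kernel_relations_XXi
    {A : Type*} [Ring A] [Algebra ℂ A] (q : ℝ) (hq0 : 0 < q) (hq1 : q < 1)
    (t₁₁ t₁₂ t₂₁ t₂₂ τ₁₁ τ₁₂ τ₂₁ τ₂₂ : A)
    -- (i) every tᵢⱼ commutes with every τₖₗ: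
    (hcomm : ∀ s ∈ ({t₁₁, t₁₂, t₂₁, t₂₂} : Set A),
      ∀ σ ∈ ({τ₁₁, τ₁₂, τ₂₁, τ₂₂} : Set A), s * σ = σ * s)
    -- (ii) the τ's satisfy the quantum SL₂ relations:
    (hτ1 : τ₁₁ * τ₁₂ = (q : ℂ) • (τ₁₂ * τ₁₁)) (hτ2 : τ₂₁ * τ₂₂ = (q : ℂ) • (τ₂₂ * τ₂₁))
    (hτ3 : τ₁₁ * τ₂₁ = (q : ℂ) • (τ₂₁ * τ₁₁)) (hτ4 : τ₁₂ * τ₂₂ = (q : ℂ) • (τ₂₂ * τ₁₂))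
    (hτ5 : τ₁₂ * τ₂₁ = τ₂₁ * τ₁₂)
    (hτ6 : τ₁₁ * τ₂₂ - τ₂₂ * τ₁₁ = ((q : ℂ) - (q : ℂ)⁻¹) • (τ₁₂ * τ₂₁))
    -- (iii) the t's satisfy the opposite quantum SL₂ relations:
    (ht1 : t₁₂ * t₁₁ = (q : ℂ) • (t₁₁ * t₁₂)) (ht2 : t₂₂ * t₂₁ = (q : ℂ) • (t₂₁ * t₂₂))
    (ht3 : t₂₁ * t₁₁ = (q : ℂ) • (t₁₁ * t₂₁)) (ht4 : t₂₂ * t₁₂ = (q : ℂ) • (t₁₂ * t₂₂))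
    (ht5 : t₂₁ * t₁₂ = t₁₂ * t₂₁)
    (ht6 : t₂₂ * t₁₁ - t₁₁ * t₂₂ = ((q : ℂ) - (q : ℂ)⁻¹) • (t₂₁ * t₁₂))
    -- determinant relations:
    (hdet_t : t₂₂ * t₁₁ - (q : ℂ) • (t₂₁ * t₁₂) = 1)
    (hdet_τ : τ₁₁ * τ₂₂ - (q : ℂ) • (τ₁₂ * τ₂₁) = 0)
    -- the invariant kernels:
    (k₁₁ k₁₂ k₂₁ k₂₂ : A)
    (hk11 : k₁₁ = t₁₁ * τ₂₂ - (q : ℂ) • (t₁₂ * τ₂₁))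
    (hk12 : k₁₂ = -(q : ℂ)⁻¹ • (t₁₁ * τ₁₂) + t₁₂ * τ₁₁)
    (hk21 : k₂₁ = t₂₁ * τ₂₂ - (q : ℂ) • (t₂₂ * τ₂₁))
    (hk22 : k₂₂ = -(q : ℂ)⁻¹ • (t₂₁ * τ₁₂) + t₂₂ * τ₁₁) :
    k₁₁ * k₁₂ = (q : ℂ)⁻¹ • (k₁₂ * k₁₁) ∧
    k₂₁ * k₂₂ = (q : ℂ)⁻¹ • (k₂₂ * k₂₁) ∧
    k₁₁ * k₂₁ = (q : ℂ)⁻¹ • (k₂₁ * k₁₁) ∧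
    k₁₂ * k₂₂ = (q : ℂ)⁻¹ • (k₂₂ * k₁₂) ∧
    k₁₂ * k₂₁ = k₂₁ * k₁₂ ∧
    k₁₁ * k₂₂ - k₂₂ * k₁₁ = ((q : ℂ)⁻¹ - (q : ℂ)) • (k₁₂ * k₂₁) ∧
    k₂₂ * k₁₁ - (q : ℂ) • (k₁₂ * k₂₁) = 0 := by
  subst hk11 hk12 hk21 hk22
  have hq : (q : ℂ) ≠ 0 := by
    simpa using (Complex.ofReal_ne_zero.mpr hq0.ne')
  have ht6' : t₂₂ * t₁₁ = t₁₁ * t₂₂ + ((q : ℂ) - (q : ℂ)⁻¹) • (t₁₂ * t₂₁) := by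
    rw [← ht5]; exact sub_eq_iff_eq_add'.mp ht6
  have hτ6' : τ₁₁ * τ₂₂ = τ₂₂ * τ₁₁ + ((q : ℂ) - (q : ℂ)⁻¹) • (τ₂₁ * τ₁₂) := by
    rw [← hτ5]; exact sub_eq_iff_eq_add'.mp hτ6
  have c00 : τ₁₁ * t₁₁ = t₁₁ * τ₁₁ := (hcomm t₁₁ (by simp) τ₁₁ (by simp)).symm
  have c01 : τ₁₂ * t₁₁ = t₁₁ * τ₁₂ := (hcomm t₁₁ (by simp) τ₁₂ (by simp)).symm
  have c02 : τ₂₁ * t₁₁ = t₁₁ * τ₂₁ := (hcomm t₁₁ (by simp) τ₂₁ (by simp)).symm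
  have c03 : τ₂₂ * t₁₁ = t₁₁ * τ₂₂ := (hcomm t₁₁ (by simp) τ₂₂ (by simp)).symm
  have c10 : τ₁₁ * t₁₂ = t₁₂ * τ₁₁ := (hcomm t₁₂ (by simp) τ₁₁ (by simp)).symm
  have c11 : τ₁₂ * t₁₂ = t₁₂ * τ₁₂ := (hcomm t₁₂ (by simp) τ₁₂ (by simp)).symm
  have c12 : τ₂₁ * t₁₂ = t₁₂ * τ₂₁ := (hcomm t₁₂ (by simp) τ₂₁ (by simp)).symm
  have c13 : τ₂₂ * t₁₂ = t₁₂ * τ₂₂ := (hcomm t₁₂ (by simp) τ₂₂ (by simp)).symm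
  have c20 : τ₁₁ * t₂₁ = t₂₁ * τ₁₁ := (hcomm t₂₁ (by simp) τ₁₁ (by simp)).symm
  have c21 : τ₁₂ * t₂₁ = t₂₁ * τ₁₂ := (hcomm t₂₁ (by simp) τ₁₂ (by simp)).symm
  have c22 : τ₂₁ * t₂₁ = t₂₁ * τ₂₁ := (hcomm t₂₁ (by simp) τ₂₁ (by simp)).symm
  have c23 : τ₂₂ * t₂₁ = t₂₁ * τ₂₂ := (hcomm t₂₁ (by simp) τ₂₂ (by simp)).symm
  have c30 : τ₁₁ * t₂₂ = t₂₂ * τ₁₁ := (hcomm t₂₂ (by simp) τ₁₁ (by simp)).symm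
  have c31 : τ₁₂ * t₂₂ = t₂₂ * τ₁₂ := (hcomm t₂₂ (by simp) τ₁₂ (by simp)).symm
  have c32 : τ₂₁ * t₂₂ = t₂₂ * τ₂₁ := (hcomm t₂₂ (by simp) τ₂₁ (by simp)).symm
  have c33 : τ₂₂ * t₂₂ = t₂₂ * τ₂₂ := (hcomm t₂₂ (by simp) τ₂₂ (by simp)).symm
  have main : (-(q : ℂ)⁻¹ • (t₂₁ * τ₁₂) + t₂₂ * τ₁₁) * (t₁₁ * τ₂₂ - (q : ℂ) • (t₁₂ * τ₂₁)) -
      (q : ℂ) • ((-(q : ℂ)⁻¹ • (t₁₁ * τ₁₂) + t₁₂ * τ₁₁) * (t₂₁ * τ₂₂ - (q : ℂ) • (t₂₂ * τ₂₁))) =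
      (t₂₂ * t₁₁ - (q : ℂ) • (t₂₁ * t₁₂)) * (τ₁₁ * τ₂₂ - (q : ℂ) • (τ₁₂ * τ₂₁)) := by
    simp only [mul_add, add_mul, mul_sub, sub_mul, smul_mul_assoc, mul_smul_comm, smul_add, smul_sub, smul_smul, neg_smul, smul_neg, neg_mul, mul_neg, neg_neg, mul_assoc, c00, mra c00, c01, mra c01, c02, mra c02, c03, mra c03, c10, mra c10, c11, mra c11, c12, mra c12, c13, mra c13, c20, mra c20, c21, mra c21, c22, mra c22, c23, mra c23, c30, mra c30, c31, mra c31, c32, mra c32, c33, mra c33, ht1, mrs ht1, ht2, mrs ht2, ht3, mrs ht3, ht4, mrs ht4, hτ1, mrs hτ1, hτ2, mrs hτ2, hτ3, mrs hτ3, hτ4, mrs hτ4, ht5, mra ht5, hτ5, mra hτ5, ht6', mrp ht6', hτ6', mrp hτ6']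
    match_scalars <;> field_simp <;> ring
  refine ⟨?_, ?_, ?_, ?_, ?_, ?_, by rw [main, hdet_τ, mul_zero]⟩ <;>
    (simp only [mul_add, add_mul, mul_sub, sub_mul, smul_mul_assoc, mul_smul_comm, smul_add, smul_sub, smul_smul, neg_smul, smul_neg, neg_mul, mul_neg, neg_neg, mul_assoc, c00, mra c00, c01, mra c01, c02, mra c02, c03, mra c03, c10, mra c10, c11, mra c11, c12, mra c12, c13, mra c13, c20, mra c20, c21, mra c21, c22, mra c22, c23, mra c23, c30, mra c30, c31, mra c31, c32, mra c32, c33, mra c33, ht1, mrs ht1, ht2, mrs ht2, ht3, mrs ht3, ht4, mrs ht4, hτ1, mrs hτ1, hτ2, mrs hτ2, hτ3, mrs hτ3, hτ4, mrs hτ4, ht5, mra ht5, hτ5, mra hτ5, ht6', mrp ht6', hτ6', mrp hτ6']; match_scalars <;> field_simp <;> ring)
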